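/- In the generalized assignment problem, for any stable assignment A* (with respect to preferences of jobs by value and machines by value/capacity ratio, with virtual capacity (λ−1)/λ·C_k) restricted to pairs with c_{ik} ≤ C_k/λ, the optimal assignment OPT on these pairs satisfies v(OPT) ≤ (2 + 1/(λ−1))·v(A*). -/

import Mathlib

open Classical

/-- GAP: if every pair satisfies `c i k ≤ C k / λ` and `A*` is a stable assignment
(for every unassigned pair `(i,k)`, either job `i` weakly prefers its machine by value, or
machine `k` prefers each of its assigned jobs by density and its load is at least the
virtual capacity `(λ−1)/λ · C k`), then any feasible assignment `OPT` satisfies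
`v(OPT) ≤ (2 + 1/(λ−1)) · v(A*)`. -/
theorem stmt10 {Job Machine : Type*} [Fintype Job]
    (v c : Job → Machine → ℝ) (C : Machine → ℝ) (lam : ℕ) (hlam : 2 < lam)
    (hv : ∀ i k, 0 ≤ v i k) (hc : ∀ i k, 0 < c i k)
    (hsmall : ∀ i k, c i k ≤ C k / lam)
    (Astar Aopt : Job → Option Machine)
    (hfeas_star : ∀ k, ∑ i ∈ Finset.univ.filter (fun i => Astar i = some k), c i k ≤ C k)
    (hfeas_opt : ∀ k, ∑ i ∈ Finset.univ.filter (fun i => Aopt i = some k), c i k ≤ C k)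
    (hstable : ∀ i k, Astar i ≠ some k →
      (v i k ≤ (Astar i).elim 0 (v i)) ∨
      ((∀ i', Astar i' = some k → v i k / c i k ≤ v i' k / c i' k) ∧
        ((lam : ℝ) - 1) / lam * C k ≤
          ∑ i' ∈ Finset.univ.filter (fun i' => Astar i' = some k), c i' k)) :
    ∑ i, (Aopt i).elim 0 (v i) ≤
      (2 + 1 / ((lam : ℝ) - 1)) * ∑ i, (Astar i).elim 0 (v i) := by
  classical
  have hlamR : (2:ℝ) < (lam:ℝ) := by exact_mod_cast hlam
  have hlam1 : (0:ℝ) < (lam:ℝ) - 1 := by linarith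
  have hlam0 : (0:ℝ) < (lam:ℝ) := by linarith
  set vstar : Job → ℝ := fun i => (Astar i).elim 0 (v i) with hvstar
  have hvstar0 : ∀ i, 0 ≤ vstar i := by
    intro i; cases h : Astar i with
    | none => simp [hvstar, h]
    | some k => simp [hvstar, h, hv]
  set bad : Job → Prop := fun i =>
    ∃ k, Aopt i = some k ∧ Astar i ≠ some k ∧ ¬ (v i k ≤ vstar i) with hbad
  set B : Finset Job := Finset.univ.filter bad with hB
  -- good jobs are bounded by their own vstar
  have hgood : ∀ i ∉ B, (Aopt i).elim 0 (v i) ≤ vstar i := by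
    intro i hiB
    have hnb : ¬ bad i := by
      intro h; exact hiB (Finset.mem_filter.mpr ⟨Finset.mem_univ i, h⟩)
    cases h : Aopt i with
    | none => simpa [h] using hvstar0 i
    | some k =>
      simp only [h, Option.elim]
      by_cases hs : Astar i = some k
      · simp [hvstar, hs]
      · by_contra hlt
        exact hnb ⟨k, h, hs, not_le.mpr (lt_of_not_ge hlt)⟩
  -- per machine bound for bad jobs
  have hmach : ∀ k, (∃ i0, i0 ∈ B ∧ Aopt i0 = some k) →
      ∑ i ∈ B.filter (fun i => Aopt i = some k), v i k ≤
        ((lam:ℝ)/((lam:ℝ)-1)) *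
          ∑ i' ∈ Finset.univ.filter (fun i' => Astar i' = some k), vstar i' := by
    rintro k ⟨i0, hi0B, hi0k⟩
    have hbranch : ∀ i ∈ B.filter (fun i => Aopt i = some k),
        (∀ i', Astar i' = some k → v i k / c i k ≤ v i' k / c i' k) ∧
          ((lam : ℝ) - 1) / lam * C k ≤
            ∑ i' ∈ Finset.univ.filter (fun i' => Astar i' = some k), c i' k := by
      intro i hi
      obtain ⟨hiB, hik⟩ := Finset.mem_filter.mp hi
      obtain ⟨k', hk', hne, hnv⟩ := (Finset.mem_filter.mp hiB).2
      have hkk : k' = k := by rw [hik] at hk'; exact (Option.some.inj hk').symm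
      rw [hkk] at hne hnv
      rcases hstable i k hne with h1 | h2
      · exact absurd h1 hnv
      · exact h2
    have hb0 := hbranch i0 (Finset.mem_filter.mpr ⟨hi0B, hi0k⟩)
    have hCk : 0 < C k := by
      have h1 := hc i0 k
      have h2 := hsmall i0 k
      have h3 : 0 < C k / lam := lt_of_lt_of_le h1 h2
      rcases div_pos_iff.mp h3 with ⟨h, _⟩ | ⟨_, h⟩
      · exact h
      · linarith
    set S : Finset Job := Finset.univ.filter (fun i' => Astar i' = some k) with hS
    have hload : ((lam : ℝ) - 1) / lam * C k ≤ ∑ i' ∈ S, c i' k := hb0.2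
    have hloadpos : 0 < ∑ i' ∈ S, c i' k := by
      have : 0 < ((lam : ℝ) - 1) / lam * C k := by positivity
      linarith
    have hSne : S.Nonempty := by
      by_contra h
      rw [Finset.not_nonempty_iff_eq_empty] at h
      rw [h, Finset.sum_empty] at hloadpos
      linarith
    obtain ⟨m, hmS, hmin⟩ := S.exists_min_image (fun i' => v i' k / c i' k) hSne
    set ρ := v m k / c m k with hρ
    have hρ0 : 0 ≤ ρ := div_nonneg (hv m k) (hc m k).le
    have hmk : Astar m = some k := (Finset.mem_filter.mp hmS).2
    -- each bad job's value ≤ ρ * its capacity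
    have hbadv : ∀ i ∈ B.filter (fun i => Aopt i = some k), v i k ≤ ρ * c i k := by
      intro i hi
      have h := (hbranch i hi).1 m hmk
      exact (div_le_iff₀ (hc i k)).mp h
    have h1 : ∑ i ∈ B.filter (fun i => Aopt i = some k), v i k ≤ ρ * C k := by
      calc ∑ i ∈ B.filter (fun i => Aopt i = some k), v i k
          ≤ ∑ i ∈ B.filter (fun i => Aopt i = some k), ρ * c i k :=
            Finset.sum_le_sum hbadv
        _ = ρ * ∑ i ∈ B.filter (fun i => Aopt i = some k), c i k := by
            rw [Finset.mul_sum]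
        _ ≤ ρ * C k := by
            apply mul_le_mul_of_nonneg_left _ hρ0
            calc ∑ i ∈ B.filter (fun i => Aopt i = some k), c i k
                ≤ ∑ i ∈ Finset.univ.filter (fun i => Aopt i = some k), c i k := by
                  apply Finset.sum_le_sum_of_subset_of_nonneg
                  · intro x hx
                    have := Finset.mem_filter.mp hx
                    exact Finset.mem_filter.mpr ⟨Finset.mem_univ x, this.2⟩
                  · intro x _ _; exact (hc x k).le
              _ ≤ C k := hfeas_opt k
    have h2 : ρ * (((lam : ℝ) - 1) / lam * C k) ≤ ∑ i' ∈ S, vstar i' := by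
      calc ρ * (((lam : ℝ) - 1) / lam * C k) ≤ ρ * ∑ i' ∈ S, c i' k :=
            mul_le_mul_of_nonneg_left hload hρ0
        _ = ∑ i' ∈ S, ρ * c i' k := Finset.mul_sum _ _ _
        _ ≤ ∑ i' ∈ S, vstar i' := by
            apply Finset.sum_le_sum
            intro i' hi'
            have hk' : Astar i' = some k := (Finset.mem_filter.mp hi').2
            have : ρ ≤ v i' k / c i' k := hmin i' hi'
            have := (le_div_iff₀ (hc i' k)).mp this
            simpa [hvstar, hk'] using this
    have key : ρ * C k = ((lam:ℝ)/((lam:ℝ)-1)) * (ρ * (((lam : ℝ) - 1) / lam * C k)) := by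
      field_simp
    calc ∑ i ∈ B.filter (fun i => Aopt i = some k), v i k ≤ ρ * C k := h1
      _ = ((lam:ℝ)/((lam:ℝ)-1)) * (ρ * (((lam : ℝ) - 1) / lam * C k)) := key
      _ ≤ ((lam:ℝ)/((lam:ℝ)-1)) * ∑ i' ∈ S, vstar i' := by
          apply mul_le_mul_of_nonneg_left h2
          positivity
  -- sum over bad jobs, grouped by their OPT machine
  set t : Finset (Option Machine) := B.image Aopt with ht
  have hfib : ∑ o ∈ t, ∑ i ∈ B.filter (fun i => Aopt i = o), (Aopt i).elim 0 (v i)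
      = ∑ i ∈ B, (Aopt i).elim 0 (v i) := by
    apply Finset.sum_fiberwise_of_maps_to
    intro i hi; exact Finset.mem_image_of_mem Aopt hi
  set F : Option Machine → ℝ :=
    fun o => ∑ i' ∈ Finset.univ.filter (fun i' => Astar i' = o), vstar i' with hF
  have hF0 : ∀ o, 0 ≤ F o := fun o => Finset.sum_nonneg (fun i _ => hvstar0 i)
  have hbadsum : ∑ i ∈ B, (Aopt i).elim 0 (v i) ≤
      ((lam:ℝ)/((lam:ℝ)-1)) * ∑ o ∈ t, F o := by
    rw [← hfib, Finset.mul_sum]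
    apply Finset.sum_le_sum
    intro o ho
    obtain ⟨i0, hi0B, hi0o⟩ := Finset.mem_image.mp ho
    cases o with
    | none =>
      exfalso
      obtain ⟨k', hk', _, _⟩ := (Finset.mem_filter.mp hi0B).2
      rw [hi0o] at hk'; cases hk'
    | some k =>
      have : ∑ i ∈ B.filter (fun i => Aopt i = some k), (Aopt i).elim 0 (v i)
          = ∑ i ∈ B.filter (fun i => Aopt i = some k), v i k := by
        apply Finset.sum_congr rfl
        intro i hi
        have := (Finset.mem_filter.mp hi).2
        simp [this]
      rw [this]
      exact hmach k ⟨i0, hi0B, hi0o⟩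
  -- total of F over t is at most total vstar
  have hFtot : ∑ o ∈ t, F o ≤ ∑ i, vstar i := by
    have hdisj : (t : Set (Option Machine)).PairwiseDisjoint
        (fun o => Finset.univ.filter (fun i' => Astar i' = o)) := by
      intro o1 _ o2 _ hne
      refine Finset.disjoint_left.mpr ?_
      intro i hi1 hi2
      rw [Finset.mem_filter] at hi1 hi2
      exact hne (hi1.2.symm.trans hi2.2)
    calc ∑ o ∈ t, F o
        = ∑ i ∈ t.biUnion (fun o => Finset.univ.filter (fun i' => Astar i' = o)), vstar i :=
          (Finset.sum_biUnion hdisj).symm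
      _ ≤ ∑ i, vstar i := by
          apply Finset.sum_le_sum_of_subset_of_nonneg
          · intro x _; exact Finset.mem_univ x
          · intro x _ _; exact hvstar0 x
  -- assemble
  have hsplit : ∑ i, (Aopt i).elim 0 (v i) =
      (∑ i ∈ Finset.univ.filter bad, (Aopt i).elim 0 (v i)) +
        ∑ i ∈ Finset.univ.filter (fun i => ¬ bad i), (Aopt i).elim 0 (v i) :=
    (Finset.sum_filter_add_sum_filter_not Finset.univ bad _).symm
  have hgoodsum : ∑ i ∈ Finset.univ.filter (fun i => ¬ bad i), (Aopt i).elim 0 (v i)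
      ≤ ∑ i, vstar i := by
    calc ∑ i ∈ Finset.univ.filter (fun i => ¬ bad i), (Aopt i).elim 0 (v i)
        ≤ ∑ i ∈ Finset.univ.filter (fun i => ¬ bad i), vstar i := by
          apply Finset.sum_le_sum
          intro i hi
          apply hgood
          intro hiB
          exact (Finset.mem_filter.mp hi).2 (Finset.mem_filter.mp hiB).2
      _ ≤ ∑ i, vstar i := by
          apply Finset.sum_le_sum_of_subset_of_nonneg
          · intro x _; exact Finset.mem_univ x
          · intro x _ _; exact hvstar0 x
  have hbadfinal : ∑ i ∈ B, (Aopt i).elim 0 (v i) ≤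
      ((lam:ℝ)/((lam:ℝ)-1)) * ∑ i, vstar i := by
    calc ∑ i ∈ B, (Aopt i).elim 0 (v i) ≤ ((lam:ℝ)/((lam:ℝ)-1)) * ∑ o ∈ t, F o := hbadsum
      _ ≤ ((lam:ℝ)/((lam:ℝ)-1)) * ∑ i, vstar i := by
          apply mul_le_mul_of_nonneg_left hFtot
          positivity
  have hid : (lam:ℝ)/((lam:ℝ)-1) = 1 + 1/((lam:ℝ)-1) := by
    have h0 : ((lam:ℝ)-1) ≠ 0 := ne_of_gt hlam1
    field_simp
    ring
  rw [hsplit]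
  rw [hid] at hbadfinal
  rw [← hB] at hsplit ⊢
  linarith
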